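/- For every natural number n ≥ 1 and every λ ∈ k, the representation M_n(λ) of Q is indecomposable; moreover, for n, m ≥ 1 and λ, μ ∈ k, the representations M_n(λ) and M_m(μ) are isomorphic if and only if n = m and λ = μ. (This is the continuous one-parameter series of representations of the cyclic quiver Q used in the reduction for gentle algebras.) -/

import Mathlib

variable (k : Type) [Field k]

/-- A finite-dimensional representation of the quiver `Q` with vertices `1,2,3,4`
and arrows `a : 1 → 2`, `b : 1 → 3`, `c : 2 → 4`, `d : 3 → 4`. -/
structure QRep where
  V1 : Type
  V2 : Type
  V3 : Type
  V4 : Type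
  [acg1 : AddCommGroup V1]
  [acg2 : AddCommGroup V2]
  [acg3 : AddCommGroup V3]
  [acg4 : AddCommGroup V4]
  [mod1 : Module k V1]
  [mod2 : Module k V2]
  [mod3 : Module k V3]
  [mod4 : Module k V4]
  [fin1 : FiniteDimensional k V1]
  [fin2 : FiniteDimensional k V2]
  [fin3 : FiniteDimensional k V3]
  [fin4 : FiniteDimensional k V4]
  ma : V1 →ₗ[k] V2
  mb : V1 →ₗ[k] V3
  mc : V2 →ₗ[k] V4
  md : V3 →ₗ[k] V4

attribute [instance] QRep.acg1 QRep.acg2 QRep.acg3 QRep.acg4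
  QRep.mod1 QRep.mod2 QRep.mod3 QRep.mod4
  QRep.fin1 QRep.fin2 QRep.fin3 QRep.fin4

variable {k}

/-- Morphisms of representations of `Q`. -/
@[ext]
structure QHom (M N : QRep k) where
  f1 : M.V1 →ₗ[k] N.V1
  f2 : M.V2 →ₗ[k] N.V2
  f3 : M.V3 →ₗ[k] N.V3
  f4 : M.V4 →ₗ[k] N.V4
  comm_a : f2 ∘ₗ M.ma = N.ma ∘ₗ f1
  comm_b : f3 ∘ₗ M.mb = N.mb ∘ₗ f1
  comm_c : f4 ∘ₗ M.mc = N.mc ∘ₗ f2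
  comm_d : f4 ∘ₗ M.md = N.md ∘ₗ f3

/-- Two representations are isomorphic iff there is a morphism all of whose
components are bijective. -/
def QIso (M N : QRep k) : Prop :=
  ∃ f : QHom M N, Function.Bijective f.f1 ∧ Function.Bijective f.f2 ∧
    Function.Bijective f.f3 ∧ Function.Bijective f.f4

/-- The zero representation(s). -/
def QRep.IsZeroRep (M : QRep k) : Prop :=
  Subsingleton M.V1 ∧ Subsingleton M.V2 ∧ Subsingleton M.V3 ∧ Subsingleton M.V4

/-- Vertexwise direct sum of representations. -/
def QRep.dsum (M N : QRep k) : QRep k where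
  V1 := M.V1 × N.V1
  V2 := M.V2 × N.V2
  V3 := M.V3 × N.V3
  V4 := M.V4 × N.V4
  ma := M.ma.prodMap N.ma
  mb := M.mb.prodMap N.mb
  mc := M.mc.prodMap N.mc
  md := M.md.prodMap N.md

/-- Direct sum of `n` copies of a representation. -/
def QRep.dpow (M : QRep k) (n : ℕ) : QRep k where
  V1 := Fin n → M.V1
  V2 := Fin n → M.V2
  V3 := Fin n → M.V3
  V4 := Fin n → M.V4
  ma := M.ma.compLeft (Fin n)
  mb := M.mb.compLeft (Fin n)
  mc := M.mc.compLeft (Fin n)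
  md := M.md.compLeft (Fin n)

/-- A representation is indecomposable if it is nonzero and not isomorphic to a
direct sum of two nonzero representations. -/
def QRep.Indecomposable (M : QRep k) : Prop :=
  ¬ M.IsZeroRep ∧ ∀ A B : QRep k, QIso M (A.dsum B) → A.IsZeroRep ∨ B.IsZeroRep

/-- `0 → A → B → C → 0` is short exact (vertexwise). -/
def QShortExact {A B C : QRep k} (f : QHom A B) (g : QHom B C) : Prop :=
  (Function.Injective f.f1 ∧ Function.Injective f.f2 ∧
    Function.Injective f.f3 ∧ Function.Injective f.f4) ∧
  (Function.Surjective g.f1 ∧ Function.Surjective g.f2 ∧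
    Function.Surjective g.f3 ∧ Function.Surjective g.f4) ∧
  (LinearMap.range f.f1 = LinearMap.ker g.f1 ∧ LinearMap.range f.f2 = LinearMap.ker g.f2 ∧
    LinearMap.range f.f3 = LinearMap.ker g.f3 ∧ LinearMap.range f.f4 = LinearMap.ker g.f4)

variable (k)

/-- The `n×n` Jordan block with eigenvalue `lam`, as a linear endomorphism of `kⁿ`. -/
def jordan (n : ℕ) (lam : k) : (Fin n → k) →ₗ[k] (Fin n → k) :=
  Matrix.mulVecLin (Matrix.of fun i j : Fin n =>
    if i = j then lam else if (i : ℕ) + 1 = (j : ℕ) then 1 else 0)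

/-- The representation `M_n(λ) = (kⁿ,kⁿ,kⁿ,kⁿ; id,id,id,J_n(λ))`. -/
def Mlam (n : ℕ) (lam : k) : QRep k where
  V1 := Fin n → k
  V2 := Fin n → k
  V3 := Fin n → k
  V4 := Fin n → k
  ma := LinearMap.id
  mb := LinearMap.id
  mc := LinearMap.id
  md := jordan k n lam

/-- The indecomposable projective `P₁ = (k,k,k,k²)`. -/
def P1 : QRep k where
  V1 := k
  V2 := k
  V3 := k
  V4 := k × k
  ma := LinearMap.id
  mb := LinearMap.id
  mc := LinearMap.inl k k k
  md := LinearMap.inr k k k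

/-- The indecomposable projective `P₂ = (0,k,0,k)`. -/
def P2 : QRep k where
  V1 := Fin 0 → k
  V2 := k
  V3 := Fin 0 → k
  V4 := k
  ma := 0
  mb := 0
  mc := LinearMap.id
  md := 0

/-- The indecomposable projective `P₃ = (0,0,k,k)`. -/
def P3 : QRep k where
  V1 := Fin 0 → k
  V2 := Fin 0 → k
  V3 := k
  V4 := k
  ma := 0
  mb := 0
  mc := 0
  md := LinearMap.id

/-- The indecomposable projective `P₄ = (0,0,0,k)`. -/
def P4 : QRep k where
  V1 := Fin 0 → k
  V2 := Fin 0 → k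
  V3 := Fin 0 → k
  V4 := k
  ma := 0
  mb := 0
  mc := 0
  md := 0

/-! ### Auxiliary material -/

section Aux

variable {k}

variable (k) in
/-- The nilpotent shift endomorphism (Jordan block with eigenvalue `0`). -/
noncomputable def shiftE (n : ℕ) : Module.End k (Fin n → k) := jordan k n 0

lemma jordan_apply (n : ℕ) (lam : k) (v : Fin n → k) (i : Fin n) :
    jordan k n lam v i
      = lam * v i + (if h : (i : ℕ) + 1 < n then v ⟨(i : ℕ) + 1, h⟩ else 0) := by
  simp only [jordan, Matrix.mulVecLin_apply, Matrix.mulVec, dotProduct,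
    Matrix.of_apply]
  have hterm : ∀ j : Fin n,
      (if i = j then lam else if (i : ℕ) + 1 = (j : ℕ) then (1:k) else 0) * v j
        = (if i = j then lam * v j else 0)
          + (if (i : ℕ) + 1 = (j : ℕ) then v j else 0) := by
    intro j
    rcases eq_or_ne i j with rfl | hij
    · have hne : ¬ ((i : ℕ) + 1 = (i : ℕ)) := by omega
      simp [hne]
    · rw [if_neg hij, if_neg hij, zero_add]
      split_ifs with h1
      · rw [one_mul]
      · rw [zero_mul]
  rw [Finset.sum_congr rfl (fun j _ => hterm j), Finset.sum_add_distrib]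
  congr 1
  · rw [Finset.sum_ite_eq]
    simp
  · split
    · next h =>
      rw [Finset.sum_eq_single (⟨(i : ℕ) + 1, h⟩ : Fin n)]
      · rw [if_pos]
        simp [Fin.val_mk]
      · intro j _ hj
        rw [if_neg]
        intro hc
        exact hj (Fin.ext hc.symm)
      · intro hmem
        exact absurd (Finset.mem_univ _) hmem
    · next h =>
      apply Finset.sum_eq_zero
      intro j _
      rw [if_neg]
      intro hc
      exact h (by rw [hc]; exact j.isLt)

lemma shift_apply (n : ℕ) (v : Fin n → k) (i : Fin n) :
    shiftE k n v i = if h : (i : ℕ) + 1 < n then v ⟨(i : ℕ) + 1, h⟩ else 0 := by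
  rw [shiftE, jordan_apply, zero_mul, zero_add]

lemma jordan_eq (n : ℕ) (lam : k) :
    jordan k n lam = lam • (1 : Module.End k (Fin n → k)) + shiftE k n := by
  refine LinearMap.ext fun v => funext fun i => ?_
  rw [jordan_apply, ← shift_apply]
  simp [smul_eq_mul]

lemma shift_pow_apply (n j : ℕ) (v : Fin n → k) (i : Fin n) :
    ((shiftE k n) ^ j) v i = if h : (i : ℕ) + j < n then v ⟨(i : ℕ) + j, h⟩ else 0 := by
  induction j generalizing v i with
  | zero =>
    have h0 : (i : ℕ) + 0 < n := by simpa using i.isLt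
    rw [pow_zero, dif_pos h0]
    have : (⟨(i : ℕ) + 0, h0⟩ : Fin n) = i := by ext; simp
    rw [this]
    rfl
  | succ j ih =>
    rw [pow_succ, Module.End.mul_apply, ih]
    split
    · next h =>
      rw [shift_apply]
      simp only [Fin.val_mk]
      split
      · next h2 =>
        rw [dif_pos (by omega : (i : ℕ) + (j + 1) < n)]
        congr 1
      · next h2 =>
        rw [dif_neg (by omega : ¬ ((i : ℕ) + (j + 1) < n))]
    · next h =>
      rw [dif_neg (by omega : ¬ ((i : ℕ) + (j + 1) < n))]

lemma shift_pow_n (n : ℕ) : (shiftE k n) ^ n = 0 := by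
  apply LinearMap.ext
  intro v
  funext i
  rw [shift_pow_apply, dif_neg (by omega)]
  rfl

lemma idem_pow {R : Type _} [Monoid R] (u : R) (h : u * u = u) (j : ℕ) :
    u ^ (j + 1) = u := by
  induction j with
  | zero => exact pow_one u
  | succ i ih => rw [pow_succ, ih, h]
/-- Components of a morphism between `Mlam`'s. -/
lemma qhom_mlam {n m : ℕ} {lam mu : k} (f : QHom (Mlam k n lam) (Mlam k m mu)) :
    f.f2 = f.f1 ∧ f.f3 = f.f1 ∧ f.f4 = f.f1 ∧
      f.f1 ∘ₗ jordan k n lam = jordan k m mu ∘ₗ f.f1 := by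
  have ha := f.comm_a
  have hb := f.comm_b
  have hc := f.comm_c
  have hd := f.comm_d
  refine ⟨LinearMap.ext fun x => LinearMap.congr_fun ha x,
    LinearMap.ext fun x => LinearMap.congr_fun hb x,
    LinearMap.ext fun x => (LinearMap.congr_fun hc x).trans (LinearMap.congr_fun ha x),
    LinearMap.ext fun x => ?_⟩
  have h := LinearMap.congr_fun hd x
  show f.f1 (jordan k n lam x) = jordan k m mu (f.f1 x)
  exact (((LinearMap.congr_fun hc (jordan k n lam x)).trans
    (LinearMap.congr_fun ha (jordan k n lam x))).symm.trans h).trans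
    (congrArg (jordan k m mu) (LinearMap.congr_fun hb x))

/-- Composition of morphisms. -/
def QHom.comp {M N P : QRep k} (g : QHom N P) (f : QHom M N) : QHom M P where
  f1 := g.f1 ∘ₗ f.f1
  f2 := g.f2 ∘ₗ f.f2
  f3 := g.f3 ∘ₗ f.f3
  f4 := g.f4 ∘ₗ f.f4
  comm_a := by
    rw [LinearMap.comp_assoc, f.comm_a, ← LinearMap.comp_assoc, g.comm_a,
      LinearMap.comp_assoc]
  comm_b := by
    rw [LinearMap.comp_assoc, f.comm_b, ← LinearMap.comp_assoc, g.comm_b,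
      LinearMap.comp_assoc]
  comm_c := by
    rw [LinearMap.comp_assoc, f.comm_c, ← LinearMap.comp_assoc, g.comm_c,
      LinearMap.comp_assoc]
  comm_d := by
    rw [LinearMap.comp_assoc, f.comm_d, ← LinearMap.comp_assoc, g.comm_d,
      LinearMap.comp_assoc]

/-- The projection endomorphism of a direct sum onto the first summand. -/
def pQ (A B : QRep k) : QHom (A.dsum B) (A.dsum B) where
  f1 := LinearMap.inl k A.V1 B.V1 ∘ₗ LinearMap.fst k A.V1 B.V1
  f2 := LinearMap.inl k A.V2 B.V2 ∘ₗ LinearMap.fst k A.V2 B.V2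
  f3 := LinearMap.inl k A.V3 B.V3 ∘ₗ LinearMap.fst k A.V3 B.V3
  f4 := LinearMap.inl k A.V4 B.V4 ∘ₗ LinearMap.fst k A.V4 B.V4
  comm_a := by refine LinearMap.ext fun x => ?_; exact Prod.ext rfl (map_zero B.ma).symm
  comm_b := by refine LinearMap.ext fun x => ?_; exact Prod.ext rfl (map_zero B.mb).symm
  comm_c := by refine LinearMap.ext fun x => ?_; exact Prod.ext rfl (map_zero B.mc).symm
  comm_d := by refine LinearMap.ext fun x => ?_; exact Prod.ext rfl (map_zero B.md).symm

/-- Inverse of an isomorphism of representations. -/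
noncomputable def QHom.inv {M N : QRep k} (f : QHom M N)
    (h1 : Function.Bijective f.f1) (h2 : Function.Bijective f.f2)
    (h3 : Function.Bijective f.f3) (h4 : Function.Bijective f.f4) : QHom N M where
  f1 := (LinearEquiv.ofBijective f.f1 h1).symm.toLinearMap
  f2 := (LinearEquiv.ofBijective f.f2 h2).symm.toLinearMap
  f3 := (LinearEquiv.ofBijective f.f3 h3).symm.toLinearMap
  f4 := (LinearEquiv.ofBijective f.f4 h4).symm.toLinearMap
  comm_a := by
    have k1 : ∀ y, f.f1 ((LinearEquiv.ofBijective f.f1 h1).symm y) = y := fun y =>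
      (LinearEquiv.ofBijective f.f1 h1).apply_symm_apply y
    have k2 : ∀ y, f.f2 ((LinearEquiv.ofBijective f.f2 h2).symm y) = y := fun y =>
      (LinearEquiv.ofBijective f.f2 h2).apply_symm_apply y
    refine LinearMap.ext fun x => ?_
    apply h2.injective
    have ha := LinearMap.congr_fun f.comm_a ((LinearEquiv.ofBijective f.f1 h1).symm x)
    simp only [LinearMap.comp_apply, LinearEquiv.coe_coe] at ha ⊢
    rw [k2, ha, k1]
  comm_b := by
    have k1 : ∀ y, f.f1 ((LinearEquiv.ofBijective f.f1 h1).symm y) = y := fun y =>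
      (LinearEquiv.ofBijective f.f1 h1).apply_symm_apply y
    have k3 : ∀ y, f.f3 ((LinearEquiv.ofBijective f.f3 h3).symm y) = y := fun y =>
      (LinearEquiv.ofBijective f.f3 h3).apply_symm_apply y
    refine LinearMap.ext fun x => ?_
    apply h3.injective
    have hb := LinearMap.congr_fun f.comm_b ((LinearEquiv.ofBijective f.f1 h1).symm x)
    simp only [LinearMap.comp_apply, LinearEquiv.coe_coe] at hb ⊢
    rw [k3, hb, k1]
  comm_c := by
    have k2 : ∀ y, f.f2 ((LinearEquiv.ofBijective f.f2 h2).symm y) = y := fun y =>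
      (LinearEquiv.ofBijective f.f2 h2).apply_symm_apply y
    have k4 : ∀ y, f.f4 ((LinearEquiv.ofBijective f.f4 h4).symm y) = y := fun y =>
      (LinearEquiv.ofBijective f.f4 h4).apply_symm_apply y
    refine LinearMap.ext fun x => ?_
    apply h4.injective
    have hc := LinearMap.congr_fun f.comm_c ((LinearEquiv.ofBijective f.f2 h2).symm x)
    simp only [LinearMap.comp_apply, LinearEquiv.coe_coe] at hc ⊢
    rw [k4, hc, k2]
  comm_d := by
    have k3 : ∀ y, f.f3 ((LinearEquiv.ofBijective f.f3 h3).symm y) = y := fun y =>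
      (LinearEquiv.ofBijective f.f3 h3).apply_symm_apply y
    have k4 : ∀ y, f.f4 ((LinearEquiv.ofBijective f.f4 h4).symm y) = y := fun y =>
      (LinearEquiv.ofBijective f.f4 h4).apply_symm_apply y
    refine LinearMap.ext fun x => ?_
    apply h4.injective
    have hd := LinearMap.congr_fun f.comm_d ((LinearEquiv.ofBijective f.f3 h3).symm x)
    simp only [LinearMap.comp_apply, LinearEquiv.coe_coe] at hd ⊢
    rw [k4, hd, k3]


lemma range_shift (n : ℕ) (hn : 1 ≤ n) (w : Fin n → k) (hw : w ⟨n - 1, by omega⟩ = 0) :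
    ∃ x, shiftE k n x = w := by
  refine ⟨fun j => w ⟨(j : ℕ) - 1, lt_of_le_of_lt (Nat.sub_le _ _) j.isLt⟩,
    funext fun i => ?_⟩
  rw [shift_apply]
  split
  · next h => rfl
  · next h =>
    have hi : i = ⟨n - 1, by omega⟩ := by
      ext
      simp only [Fin.val_mk]
      have := i.isLt
      omega
    rw [hi]
    exact hw.symm

lemma shift_last (n : ℕ) (hn : 1 ≤ n) (y : Fin n → k) :
    shiftE k n y ⟨n - 1, by omega⟩ = 0 := by
  rw [shift_apply, dif_neg]
  simp only [Fin.val_mk]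
  omega

lemma scalar_last (n : ℕ) (hn : 1 ≤ n) (u : Module.End k (Fin n → k))
    (hcomm : u * shiftE k n = shiftE k n * u) (v : Fin n → k) :
    u v ⟨n - 1, by omega⟩
      = u ((Pi.single (⟨n - 1, by omega⟩ : Fin n) (1:k) : Fin n → k)) ⟨n - 1, by omega⟩ * v ⟨n - 1, by omega⟩ := by
  have hw : (v - v ⟨n - 1, by omega⟩ • (Pi.single (⟨n - 1, by omega⟩ : Fin n) (1:k) : Fin n → k))
      ⟨n - 1, by omega⟩ = 0 := by
    simp
  obtain ⟨x, hx⟩ := range_shift n hn _ hw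
  have hdecomp : v = v ⟨n - 1, by omega⟩ • (Pi.single (⟨n - 1, by omega⟩ : Fin n) (1:k) : Fin n → k)
      + shiftE k n x := by
    rw [hx]
    abel
  conv_lhs => rw [hdecomp]
  rw [map_add, map_smul]
  have hSu : u (shiftE k n x) = shiftE k n (u x) := LinearMap.congr_fun hcomm x
  rw [Pi.add_apply, Pi.smul_apply, hSu, shift_last n hn, add_zero, smul_eq_mul,
    mul_comm]

lemma idem_eq_zero (n : ℕ) (hn : 1 ≤ n) (u : Module.End k (Fin n → k))
    (hcomm : u * shiftE k n = shiftE k n * u) (hidem : u * u = u)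
    (hc : u ((Pi.single (⟨n - 1, by omega⟩ : Fin n) (1:k) : Fin n → k)) ⟨n - 1, by omega⟩ = 0) : u = 0 := by
  have hlast : ∀ v, u v ⟨n - 1, by omega⟩ = 0 := fun v => by
    rw [scalar_last n hn u hcomm v, hc, zero_mul]
  have hcb : Commute u (shiftE k n) := hcomm
  have hrange : ∀ j : ℕ, ∀ v, ∃ w, ((shiftE k n) ^ j) w = (u ^ j) v := by
    intro j
    induction j with
    | zero => exact fun v => ⟨v, rfl⟩
    | succ j ih =>
      intro v
      obtain ⟨w, hw⟩ := ih v
      obtain ⟨y, hy⟩ := range_shift n hn (u w) (hlast w)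
      refine ⟨y, ?_⟩
      have hcp : u * (shiftE k n) ^ j = (shiftE k n) ^ j * u := (hcb.pow_right j)
      calc ((shiftE k n) ^ (j+1)) y = ((shiftE k n) ^ j) (shiftE k n y) := by
            rw [pow_succ, Module.End.mul_apply]
        _ = ((shiftE k n) ^ j) (u w) := by rw [hy]
        _ = u (((shiftE k n) ^ j) w) := (LinearMap.congr_fun hcp w).symm
        _ = u ((u ^ j) v) := by rw [hw]
        _ = (u ^ (j+1)) v := by rw [pow_succ', Module.End.mul_apply]
  have hun : u ^ n = 0 := by
    apply LinearMap.ext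
    intro v
    obtain ⟨w, hw⟩ := hrange n v
    rw [← hw, shift_pow_n]
    rfl
  have hupow : u ^ n = u := by
    have h' := idem_pow u hidem (n - 1)
    rwa [show n - 1 + 1 = n from by omega] at h'
  rw [← hupow, hun]

lemma idem_cases (n : ℕ) (hn : 1 ≤ n) (u : Module.End k (Fin n → k))
    (hcomm : u * shiftE k n = shiftE k n * u) (hidem : u * u = u) :
    u = 0 ∨ u = 1 := by
  have hcc : u ((Pi.single (⟨n - 1, by omega⟩ : Fin n) (1:k) : Fin n → k)) ⟨n - 1, by omega⟩
      * u ((Pi.single (⟨n - 1, by omega⟩ : Fin n) (1:k) : Fin n → k)) ⟨n - 1, by omega⟩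
      = u ((Pi.single (⟨n - 1, by omega⟩ : Fin n) (1:k) : Fin n → k)) ⟨n - 1, by omega⟩ := by
    have h1 := scalar_last n hn u hcomm (u ((Pi.single (⟨n - 1, by omega⟩ : Fin n) (1:k) : Fin n → k)))
    have h2 : u (u ((Pi.single (⟨n - 1, by omega⟩ : Fin n) (1:k) : Fin n → k)))
        = u ((Pi.single (⟨n - 1, by omega⟩ : Fin n) (1:k) : Fin n → k)) := by
      conv_lhs => rw [← Module.End.mul_apply, hidem]
    rw [h2] at h1
    rw [← h1]
  have hz : (u ((Pi.single (⟨n - 1, by omega⟩ : Fin n) (1:k) : Fin n → k)) ⟨n - 1, by omega⟩ - 1)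
      * u ((Pi.single (⟨n - 1, by omega⟩ : Fin n) (1:k) : Fin n → k)) ⟨n - 1, by omega⟩ = 0 := by
    rw [sub_mul, one_mul, hcc, sub_self]
  rcases mul_eq_zero.mp hz with h | h
  · -- diagonal coefficient is 1 : u = 1
    right
    have h1 : u ((Pi.single (⟨n - 1, by omega⟩ : Fin n) (1:k) : Fin n → k)) ⟨n - 1, by omega⟩ = 1 :=
sub_eq_zero.mp h
    have hcomm' : (1 - u) * shiftE k n = shiftE k n * (1 - u) := by
      rw [sub_mul, mul_sub, one_mul, mul_one, hcomm]
    have hidem' : (1 - u) * (1 - u) = 1 - u := by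
      have hexp : (1 - u) * (1 - u) = 1 - u - u + u * u := by
        rw [mul_sub, sub_mul, one_mul, mul_one, sub_mul, one_mul]
        abel
      rw [hexp, hidem]
      abel
    have hc' : (1 - u) ((Pi.single (⟨n - 1, by omega⟩ : Fin n) (1:k) : Fin n → k)) ⟨n - 1, by omega⟩
        = 0 := by
      rw [LinearMap.sub_apply, Module.End.one_apply, Pi.sub_apply, h1,
        Pi.single_eq_same, sub_self]
    have := idem_eq_zero n hn (1 - u) hcomm' hidem' hc'
    have h2 : (1 : Module.End k (Fin n → k)) = u := by
      have h3 := sub_eq_zero.mp this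
      exact h3
    exact h2.symm
  · exact Or.inl (idem_eq_zero n hn u hcomm hidem h)

lemma comm_shift_of_comm_jordan (n : ℕ) (lam : k) (u : Module.End k (Fin n → k))
    (h : u * jordan k n lam = jordan k n lam * u) :
    u * shiftE k n = shiftE k n * u := by
  rw [jordan_eq, mul_add, add_mul, mul_smul_comm, smul_mul_assoc, mul_one, one_mul] at h
  exact add_left_cancel h
lemma exists_fixed {V W1 W2 : Type} [AddCommGroup V] [Module k V]
    [AddCommGroup W1] [Module k W1] [AddCommGroup W2] [Module k W2]
    (f : V →ₗ[k] W1 × W2) (hf : Function.Bijective f)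
    (g : (W1 × W2) →ₗ[k] V) (hg : ∀ x, f (g x) = x)
    (u : V →ₗ[k] V) (hu : ∀ v, u v = g ((f v).1, 0))
    (hW : ¬ Subsingleton W1) :
    ∃ v : V, v ≠ 0 ∧ u v = v := by
  rw [not_subsingleton_iff_nontrivial] at hW
  obtain ⟨a, ha⟩ := exists_ne (0 : W1)
  obtain ⟨v, hv⟩ := hf.2 (a, 0)
  refine ⟨v, ?_, ?_⟩
  · rintro rfl
    rw [map_zero] at hv
    exact ha (congrArg Prod.fst hv).symm
  · have h1 : ((f v).1, (0 : W2)) = f v := by rw [hv]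
    rw [hu, h1]
    apply hf.1
    rw [hg]

lemma exists_killed {V W1 W2 : Type} [AddCommGroup V] [Module k V]
    [AddCommGroup W1] [Module k W1] [AddCommGroup W2] [Module k W2]
    (f : V →ₗ[k] W1 × W2) (hf : Function.Bijective f)
    (g : (W1 × W2) →ₗ[k] V) (hg : ∀ x, f (g x) = x)
    (u : V →ₗ[k] V) (hu : ∀ v, u v = g ((f v).1, 0))
    (hW : ¬ Subsingleton W2) :
    ∃ v : V, v ≠ 0 ∧ u v = 0 := by
  rw [not_subsingleton_iff_nontrivial] at hW
  obtain ⟨b, hb⟩ := exists_ne (0 : W2)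
  obtain ⟨v, hv⟩ := hf.2 (0, b)
  refine ⟨v, ?_, ?_⟩
  · rintro rfl
    rw [map_zero] at hv
    exact hb (congrArg Prod.snd hv).symm
  · rw [hu, hv]
    show g ((0:W1), (0:W2)) = 0
    rw [show ((0:W1), (0:W2)) = (0 : W1 × W2) from rfl, map_zero]

lemma jordan_conj (n : ℕ) (hn : 1 ≤ n) (lam mu : k) (g : Module.End k (Fin n → k))
    (hg : Function.Surjective g)
    (h : g * jordan k n lam = jordan k n mu * g) : lam = mu := by
  rw [jordan_eq, jordan_eq, mul_add, add_mul, mul_smul_comm, smul_mul_assoc,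
    mul_one, one_mul] at h
  -- h : lam • g + g * S = mu • g + S * g
  have h1 : g * shiftE k n = ((mu - lam) • 1 + shiftE k n) * g := by
    rw [add_mul, smul_mul_assoc, one_mul]
    have h2 : g * shiftE k n = (lam • g + g * shiftE k n) - lam • g := by abel
    rw [h2, h]
    module
  have h2 : ∀ j : ℕ, g * (shiftE k n) ^ j = ((mu - lam) • 1 + shiftE k n) ^ j * g := by
    intro j
    induction j with
    | zero => simp
    | succ j ih =>
      rw [pow_succ, ← mul_assoc, ih, mul_assoc, h1, ← mul_assoc, ← pow_succ]
  have hTn : ((mu - lam) • 1 + shiftE k n) ^ n * g = 0 := by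
    rw [← h2, shift_pow_n, mul_zero]
  have hT0 : ((mu - lam) • (1 : Module.End k (Fin n → k)) + shiftE k n) ^ n = 0 := by
    apply LinearMap.ext
    intro v
    obtain ⟨w, rfl⟩ := hg v
    exact LinearMap.congr_fun hTn w
  have hS0 : shiftE k n (Pi.single (⟨0, by omega⟩ : Fin n) (1:k) : Fin n → k) = 0 := by
    funext i
    rw [shift_apply]
    split
    · next h =>
      exact Pi.single_eq_of_ne (Fin.ne_of_val_ne (by simp)) 1
    · rfl
  have hTe : ∀ j : ℕ, (((mu - lam) • (1 : Module.End k (Fin n → k)) + shiftE k n) ^ j)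
      (Pi.single (⟨0, by omega⟩ : Fin n) (1:k) : Fin n → k)
      = (mu - lam) ^ j • (Pi.single (⟨0, by omega⟩ : Fin n) (1:k) : Fin n → k) := by
    intro j
    induction j with
    | zero => simp
    | succ j ih =>
      rw [pow_succ', Module.End.mul_apply, ih, map_smul, LinearMap.add_apply,
        LinearMap.smul_apply, Module.End.one_apply, hS0, add_zero, smul_smul,
        ← pow_succ]
  have hzero : (mu - lam) ^ n • (Pi.single (⟨0, by omega⟩ : Fin n) (1:k) : Fin n → k)
      = 0 := by
    rw [← hTe, hT0]
    rfl
  have hz : (mu - lam) ^ n = 0 := by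
    have h0 := congrFun hzero (⟨0, by omega⟩ : Fin n)
    rw [Pi.smul_apply, Pi.single_eq_same, smul_eq_mul, mul_one] at h0
    exact h0
  have := pow_eq_zero_iff (show n ≠ 0 by omega) |>.mp hz
  exact (sub_eq_zero.mp this).symm

/-- The identity morphism. -/
def QHom.idQ (M : QRep k) : QHom M M :=
  ⟨LinearMap.id, LinearMap.id, LinearMap.id, LinearMap.id,
    by simp, by simp, by simp, by simp⟩
theorem mlam_indec (n : ℕ) (hn : 1 ≤ n) (lam : k) : (Mlam k n lam).Indecomposable := by
  constructor
  · intro hz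
    have h1 : Subsingleton (Fin n → k) := hz.1
    haveI : Nonempty (Fin n) := ⟨⟨0, by omega⟩⟩
    exact (not_subsingleton (Fin n → k)) h1
  · rintro A B ⟨f, hb1, hb2, hb3, hb4⟩
    by_contra hAB
    push_neg at hAB
    obtain ⟨hA, hB⟩ := hAB
    set ψ := f.inv hb1 hb2 hb3 hb4 with hψ
    set e := ψ.comp ((pQ A B).comp f) with he
    obtain ⟨h2, h3, h4, hcomm⟩ := qhom_mlam e
    have hgf1 : ∀ x, f.f1 (ψ.f1 x) = x := fun x =>
      (LinearEquiv.ofBijective f.f1 hb1).apply_symm_apply x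
    have hgf2 : ∀ x, f.f2 (ψ.f2 x) = x := fun x =>
      (LinearEquiv.ofBijective f.f2 hb2).apply_symm_apply x
    have hgf3 : ∀ x, f.f3 (ψ.f3 x) = x := fun x =>
      (LinearEquiv.ofBijective f.f3 hb3).apply_symm_apply x
    have hgf4 : ∀ x, f.f4 (ψ.f4 x) = x := fun x =>
      (LinearEquiv.ofBijective f.f4 hb4).apply_symm_apply x
    have hp1 : ∀ x : A.V1 × B.V1, (pQ A B).f1 x = (x.1, 0) := fun x => rfl
    have hp2 : ∀ x : A.V2 × B.V2, (pQ A B).f2 x = (x.1, 0) := fun x => rfl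
    have hp3 : ∀ x : A.V3 × B.V3, (pQ A B).f3 x = (x.1, 0) := fun x => rfl
    have hp4 : ∀ x : A.V4 × B.V4, (pQ A B).f4 x = (x.1, 0) := fun x => rfl
    set U : Module.End k (Fin n → k) := e.f1 with hU
    have hu1 : ∀ v : Fin n → k, U v = ψ.f1 ((f.f1 v).1, 0) := fun v =>
      congrArg (fun t => ψ.f1 t) (hp1 (f.f1 v))
    have hu2 : ∀ v : Fin n → k, U v = ψ.f2 ((f.f2 v).1, 0) := fun v =>
      (LinearMap.congr_fun h2 v).symm.trans
        (congrArg (fun t => ψ.f2 t) (hp2 (f.f2 v)))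
    have hu3 : ∀ v : Fin n → k, U v = ψ.f3 ((f.f3 v).1, 0) := fun v =>
      (LinearMap.congr_fun h3 v).symm.trans
        (congrArg (fun t => ψ.f3 t) (hp3 (f.f3 v)))
    have hu4 : ∀ v : Fin n → k, U v = ψ.f4 ((f.f4 v).1, 0) := fun v =>
      (LinearMap.congr_fun h4 v).symm.trans
        (congrArg (fun t => ψ.f4 t) (hp4 (f.f4 v)))
    have hidem : U * U = U := by
      apply LinearMap.ext
      intro v
      show U (U v) = U v
      rw [hu1 (U v), hu1 v]
      have hh := congrArg (fun t : A.V1 × B.V1 => ψ.f1 (t.1, 0))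
        (hgf1 (((f.f1 v).1, 0) : A.V1 × B.V1))
      exact hh
    have hcomm' : U * shiftE k n = shiftE k n * U :=
      comm_shift_of_comm_jordan n lam U hcomm
    have hfix : ∃ v : Fin n → k, v ≠ 0 ∧ U v = v := by
      rw [QRep.IsZeroRep, not_and_or, not_and_or, not_and_or] at hA
      rcases hA with h | h | h | h
      · exact exists_fixed f.f1 hb1 ψ.f1 hgf1 U hu1 h
      · exact exists_fixed f.f2 hb2 ψ.f2 hgf2 U hu2 h
      · exact exists_fixed f.f3 hb3 ψ.f3 hgf3 U hu3 h
      · exact exists_fixed f.f4 hb4 ψ.f4 hgf4 U hu4 h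
    have hkill : ∃ v : Fin n → k, v ≠ 0 ∧ U v = 0 := by
      rw [QRep.IsZeroRep, not_and_or, not_and_or, not_and_or] at hB
      rcases hB with h | h | h | h
      · exact exists_killed f.f1 hb1 ψ.f1 hgf1 U hu1 h
      · exact exists_killed f.f2 hb2 ψ.f2 hgf2 U hu2 h
      · exact exists_killed f.f3 hb3 ψ.f3 hgf3 U hu3 h
      · exact exists_killed f.f4 hb4 ψ.f4 hgf4 U hu4 h
    rcases idem_cases n hn U hcomm' hidem with h0 | h1
    · obtain ⟨v, hv0, hv⟩ := hfix
      rw [h0] at hv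
      exact hv0 (by simpa using hv.symm)
    · obtain ⟨v, hv0, hv⟩ := hkill
      rw [h1] at hv
      exact hv0 (by simpa using hv)
theorem mlam_iso_iff (n m : ℕ) (hn : 1 ≤ n) (hm : 1 ≤ m) (lam mu : k) :
    QIso (Mlam k n lam) (Mlam k m mu) ↔ n = m ∧ lam = mu := by
  constructor
  · rintro ⟨f, hb1, hb2, hb3, hb4⟩
    obtain ⟨-, -, -, hcomm⟩ := qhom_mlam f
    have hnm : n = m := by
      have h1 : Module.finrank k (Fin n → k) = Module.finrank k (Fin m → k) :=
        LinearEquiv.finrank_eq (LinearEquiv.ofBijective f.f1 hb1)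
      rwa [Module.finrank_fin_fun, Module.finrank_fin_fun] at h1
    subst hnm
    exact ⟨rfl, jordan_conj n hn lam mu f.f1 hb1.2 hcomm⟩
  · rintro ⟨rfl, rfl⟩
    refine ⟨QHom.idQ (Mlam k n lam), ?_, ?_, ?_, ?_⟩ <;>
      · show Function.Bijective (LinearMap.id : (Fin n → k) →ₗ[k] (Fin n → k))
        rw [LinearMap.id_coe]
        exact Function.bijective_id

/-- For every `n ≥ 1` and `λ ∈ k` the representation `M_n(λ)` of `Q`
is indecomposable, and `M_n(λ) ≅ M_m(μ)` iff `n = m` and `λ = μ`. -/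
theorem stmt0 (k : Type) [Field k] :
    (∀ (n : ℕ), 1 ≤ n → ∀ lam : k, (Mlam k n lam).Indecomposable) ∧
    (∀ (n m : ℕ), 1 ≤ n → 1 ≤ m → ∀ lam mu : k,
      (QIso (Mlam k n lam) (Mlam k m mu) ↔ n = m ∧ lam = mu)) :=
  ⟨fun n hn lam => mlam_indec n hn lam,
    fun n m hn hm lam mu => mlam_iso_iff n m hn hm lam mu⟩
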